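/- arXiv:1909.04563 — 2 statements merged into one kernel-verified Lean document; each statement's English description precedes it below -/
import Mathlib

section
/- Fix c ∈ (0,∞) and K > 0, and let μ be a probability measure on ℝ whose cumulative distribution function G has exponential tail rate c. For each n ≥ 2, let N_n = ⌈3K·log n⌉ and let X_1^{(n)}, …, X_{N_n}^{(n)} be i.i.d. random variables with law μ on some probability space. Then n·P(#{i ≤ N_n : X_i^{(n)} ≥ √(log n)} ≥ (K·log n)/2) → 0 as n → ∞. -/
open MeasureTheory ProbabilityTheory Filter
open scoped ENNReal

lemma aux_choose_le_two_pow (n k : ℕ) : n.choose k ≤ 2 ^ n := by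
  rcases le_or_gt k n with h | h
  · calc n.choose k ≤ ∑ i ∈ Finset.range (n + 1), n.choose i :=
        Finset.single_le_sum (fun i _ => Nat.zero_le _)
          (Finset.mem_range.mpr (Nat.lt_succ_of_le h))
    _ = 2 ^ n := Nat.sum_range_choose n
  · simp [Nat.choose_eq_zero_of_lt h]

/-- Fix `c ∈ (0,∞)`, `K > 0` and a probability measure `μ` on `ℝ` whose cdf `G` has
exponential tail rate `c`. For each `n`, let `N_n = ⌈3 K log n⌉` and let
`X_1^{(n)}, …, X_{N_n}^{(n)}` be i.i.d. with law `μ` on a probability space `(Ω_n, P_n)`.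
Then `n · P_n(#{i : X_i^{(n)} ≥ √(log n)} ≥ K log n / 2) → 0` as `n → ∞`. -/
theorem many_large_weights_unlikely
    (c : ℝ) (hc : 0 < c) (K : ℝ) (hK : 0 < K)
    (μ : Measure ℝ) [IsProbabilityMeasure μ] (G : ℝ → ℝ)
    (hG : ∀ x, G x = (μ (Set.Iic x)).toReal)
    (htail : Tendsto (fun x => -Real.log (1 - G x) / x) atTop (nhds c))
    (N : ℕ → ℕ) (hNdef : ∀ n, N n = ⌈3 * K * Real.log n⌉₊)
    (Ω : ℕ → Type*) [∀ n, MeasurableSpace (Ω n)]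
    (P : ∀ n, Measure (Ω n)) (hP : ∀ n, IsProbabilityMeasure (P n))
    (X : ∀ n, Fin (N n) → Ω n → ℝ) (hXm : ∀ n i, Measurable (X n i))
    (hindep : ∀ n, 2 ≤ n → iIndepFun (X n) (P n))
    (hXlaw : ∀ n, 2 ≤ n → ∀ i, Measure.map (X n i) (P n) = μ) :
    Tendsto
      (fun n : ℕ =>
        (n : ℝ) *
          ((P n) {ω | K * Real.log n / 2 ≤
            ((Finset.univ.filter fun i => Real.sqrt (Real.log n) ≤ X n i ω).card : ℝ)}).toReal)
      atTop (nhds 0) := by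
  classical
  -- (μ (Ioi x)).toReal = 1 - G x
  have hIoi : ∀ x : ℝ, (μ (Set.Ioi x)).toReal = 1 - G x := by
    intro x
    have h1 : μ (Set.Ioi x) = 1 - μ (Set.Iic x) := by
      rw [← Set.compl_Iic, measure_compl measurableSet_Iic (measure_ne_top μ _),
        measure_univ]
    rw [hG, h1, ENNReal.toReal_sub_of_le prob_le_one ENNReal.one_ne_top, ENNReal.toReal_one]
  have hG_le_one : ∀ x : ℝ, G x ≤ 1 := by
    intro x
    rw [hG]
    exact ENNReal.toReal_le_of_le_ofReal zero_le_one (by simpa using prob_le_one)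
  -- tail bound
  have htail' : ∀ᶠ x in atTop, (μ (Set.Ioi x)).toReal ≤ Real.exp (-(c / 2) * x) := by
    filter_upwards [htail.eventually (eventually_ge_nhds (by linarith : c / 2 < c)),
      eventually_ge_atTop (1 : ℝ)] with x hx hx1
    rw [hIoi]
    rcases eq_or_lt_of_le (by linarith [hG_le_one x] : (0 : ℝ) ≤ 1 - G x) with h0 | h0
    · rw [← h0]; positivity
    · have hxpos : (0 : ℝ) < x := by linarith
      have h2 : c / 2 * x ≤ -Real.log (1 - G x) := by
        rw [le_div_iff₀ hxpos] at hx
        linarith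
      have h3 : Real.log (1 - G x) ≤ -(c / 2) * x := by linarith
      calc 1 - G x = Real.exp (Real.log (1 - G x)) := (Real.exp_log h0).symm
        _ ≤ Real.exp (-(c / 2) * x) := Real.exp_le_exp.mpr h3
  obtain ⟨x₀, hx₀⟩ := eventually_atTop.mp htail'
  -- Key measure bound via independence and union bound
  have hPbound : ∀ n : ℕ, 2 ≤ n →
      (P n) {ω | K * Real.log n / 2 ≤
          ((Finset.univ.filter fun i => Real.sqrt (Real.log n) ≤ X n i ω).card : ℝ)} ≤
        ((N n).choose ⌈K * Real.log n / 2⌉₊ : ℝ≥0∞) *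
          μ (Set.Ici (Real.sqrt (Real.log n))) ^ ⌈K * Real.log n / 2⌉₊ := by
    intro n hn
    have := hP n
    set t := Real.sqrt (Real.log n) with ht
    set mn := ⌈K * Real.log n / 2⌉₊ with hmn
    have hsub : {ω | K * Real.log n / 2 ≤
          ((Finset.univ.filter fun i => t ≤ X n i ω).card : ℝ)} ⊆
        ⋃ S ∈ Finset.powersetCard mn (Finset.univ : Finset (Fin (N n))),
          ⋂ i ∈ S, X n i ⁻¹' Set.Ici t := by
      intro ω hω
      have hcard : mn ≤ (Finset.univ.filter fun i => t ≤ X n i ω).card :=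
        Nat.ceil_le.mpr (by exact_mod_cast hω)
      obtain ⟨S, hS, hScard⟩ := Finset.exists_subset_card_eq hcard
      refine Set.mem_biUnion (Finset.mem_powersetCard.mpr ⟨Finset.subset_univ _, hScard⟩) ?_
      refine Set.mem_iInter₂.mpr fun i hi => ?_
      exact (Finset.mem_filter.mp (hS hi)).2
    calc (P n) _ ≤ (P n) (⋃ S ∈ Finset.powersetCard mn (Finset.univ : Finset (Fin (N n))),
          ⋂ i ∈ S, X n i ⁻¹' Set.Ici t) := measure_mono hsub
      _ ≤ ∑ S ∈ Finset.powersetCard mn (Finset.univ : Finset (Fin (N n))),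
          (P n) (⋂ i ∈ S, X n i ⁻¹' Set.Ici t) := measure_biUnion_finset_le _ _
      _ = ∑ S ∈ Finset.powersetCard mn (Finset.univ : Finset (Fin (N n))),
          μ (Set.Ici t) ^ mn := by
          refine Finset.sum_congr rfl fun S hS => ?_
          rw [(hindep n hn).meas_biInter
            (fun i _ => ⟨Set.Ici t, measurableSet_Ici, rfl⟩)]
          have hmap : ∀ i : Fin (N n), (P n) (X n i ⁻¹' Set.Ici t) = μ (Set.Ici t) := by
            intro i
            rw [← hXlaw n hn i, Measure.map_apply (hXm n i) measurableSet_Ici]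
          rw [Finset.prod_congr rfl fun i _ => hmap i, Finset.prod_const,
            (Finset.mem_powersetCard.mp hS).2]
      _ = ((N n).choose mn : ℝ≥0∞) * μ (Set.Ici t) ^ mn := by
          rw [Finset.sum_const, Finset.card_powersetCard, Finset.card_univ,
            Fintype.card_fin, nsmul_eq_mul]
  -- log n → ∞
  have hlog : Tendsto (fun n : ℕ => Real.log n) atTop atTop :=
    Real.tendsto_log_atTop.comp tendsto_natCast_atTop_atTop
  set M₂ : ℝ := 1 + 4 * (2 + 3 * K * Real.log 2) / (K * c) with hM₂
  have hKc : (0 : ℝ) < K * c := mul_pos hK hc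
  -- Main eventual bound: the sequence is ≤ 2 / n
  have hmain : ∀ᶠ n : ℕ in atTop,
      (n : ℝ) * ((P n) {ω | K * Real.log n / 2 ≤
          ((Finset.univ.filter fun i => Real.sqrt (Real.log n) ≤ X n i ω).card : ℝ)}).toReal
        ≤ 2 / (n : ℝ) := by
    filter_upwards [eventually_ge_atTop 2,
      hlog.eventually_ge_atTop ((max 0 (x₀ + 1)) ^ 2),
      hlog.eventually_ge_atTop 1,
      hlog.eventually_ge_atTop ((max 0 M₂) ^ 2)] with n hn hL1 hL2 hL3
    have := hP n
    set L := Real.log n with hL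
    set t := Real.sqrt L with ht
    set mn := ⌈K * L / 2⌉₊ with hmn
    have hL0 : (0 : ℝ) ≤ L := by linarith
    have hnpos : (0 : ℝ) < n := by positivity
    -- √L bounds
    have ht1 : x₀ + 1 ≤ t := by
      calc x₀ + 1 ≤ max 0 (x₀ + 1) := le_max_right _ _
        _ = Real.sqrt ((max 0 (x₀ + 1)) ^ 2) := (Real.sqrt_sq (le_max_left _ _)).symm
        _ ≤ t := Real.sqrt_le_sqrt hL1
    have ht2 : (1 : ℝ) ≤ t := by
      calc (1 : ℝ) = Real.sqrt 1 := Real.sqrt_one.symm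
        _ ≤ t := Real.sqrt_le_sqrt hL2
    have htM₂ : M₂ ≤ t := by
      calc M₂ ≤ max 0 M₂ := le_max_right _ _
        _ = Real.sqrt ((max 0 M₂) ^ 2) := (Real.sqrt_sq (le_max_left _ _)).symm
        _ ≤ t := Real.sqrt_le_sqrt hL3
    -- tail probability bound
    have hp : (μ (Set.Ici t)).toReal ≤ Real.exp (-(c / 2) * (t - 1)) := by
      calc (μ (Set.Ici t)).toReal ≤ (μ (Set.Ioi (t - 1))).toReal := by
            apply ENNReal.toReal_mono (measure_ne_top μ _)
            exact measure_mono fun x hx => lt_of_lt_of_le (by linarith : t - 1 < t) hx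
        _ ≤ Real.exp (-(c / 2) * (t - 1)) := hx₀ (t - 1) (by linarith)
    have hq0 : (0 : ℝ) < Real.exp (-(c / 2) * (t - 1)) := Real.exp_pos _
    have hq1 : Real.exp (-(c / 2) * (t - 1)) ≤ 1 := by
      apply Real.exp_le_one_iff.mpr
      nlinarith
    -- ENNReal → real bound
    have hPreal : ((P n) {ω | K * L / 2 ≤
          ((Finset.univ.filter fun i => t ≤ X n i ω).card : ℝ)}).toReal ≤
        ((N n).choose mn : ℝ) * (μ (Set.Ici t)).toReal ^ mn := by
      have h1 := hPbound n hn
      have h2 : (((N n).choose mn : ℝ≥0∞) * μ (Set.Ici t) ^ mn).toReal =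
          ((N n).choose mn : ℝ) * (μ (Set.Ici t)).toReal ^ mn := by
        simp [ENNReal.toReal_mul, ENNReal.toReal_pow]
      rw [← h2]
      exact ENNReal.toReal_mono
        (ENNReal.mul_ne_top (ENNReal.natCast_ne_top _)
          (ENNReal.pow_ne_top (measure_ne_top μ _))) h1
    have hμnonneg : (0 : ℝ) ≤ (μ (Set.Ici t)).toReal := ENNReal.toReal_nonneg
    -- combine: n * P ≤ exp(...)
    have hNle : (N n : ℝ) ≤ 3 * K * L + 1 := by
      rw [hNdef n]
      exact le_of_lt (Nat.ceil_lt_add_one (by positivity))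
    have hchoose : ((N n).choose mn : ℝ) ≤ (2 : ℝ) ^ ((3 * K * L + 1 : ℝ)) := by
      calc ((N n).choose mn : ℝ) ≤ ((2 : ℕ) ^ (N n) : ℝ) := by
            exact_mod_cast aux_choose_le_two_pow (N n) mn
        _ = (2 : ℝ) ^ ((N n : ℝ)) := by
            rw [Real.rpow_natCast]; norm_cast
        _ ≤ (2 : ℝ) ^ ((3 * K * L + 1 : ℝ)) :=
            Real.rpow_le_rpow_of_exponent_le one_le_two hNle
    have hpm : (μ (Set.Ici t)).toReal ^ mn ≤
        Real.exp (-(c / 2) * (t - 1)) ^ ((K * L / 2 : ℝ)) := by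
      calc (μ (Set.Ici t)).toReal ^ mn ≤ Real.exp (-(c / 2) * (t - 1)) ^ mn :=
            pow_le_pow_left₀ hμnonneg hp mn
        _ = Real.exp (-(c / 2) * (t - 1)) ^ ((mn : ℝ)) := (Real.rpow_natCast _ _).symm
        _ ≤ Real.exp (-(c / 2) * (t - 1)) ^ ((K * L / 2 : ℝ)) :=
            Real.rpow_le_rpow_of_exponent_ge hq0 hq1 (Nat.le_ceil _)
    have hexp1 : (2 : ℝ) ^ ((3 * K * L + 1 : ℝ)) =
        Real.exp ((3 * K * L + 1) * Real.log 2) := by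
      rw [Real.rpow_def_of_pos (by norm_num : (0:ℝ) < 2), mul_comm]
    have hexp2 : Real.exp (-(c / 2) * (t - 1)) ^ ((K * L / 2 : ℝ)) =
        Real.exp (-(c / 2) * (t - 1) * (K * L / 2)) := by
      rw [← Real.exp_log hq0]
      rw [Real.exp_log hq0, ← Real.exp_mul]
    have hnL : (n : ℝ) = Real.exp L := by
      rw [hL, Real.exp_log hnpos]
    have hkey : (n : ℝ) * ((P n) {ω | K * L / 2 ≤
          ((Finset.univ.filter fun i => t ≤ X n i ω).card : ℝ)}).toReal ≤
        Real.exp (L + (3 * K * L + 1) * Real.log 2 + -(c / 2) * (t - 1) * (K * L / 2)) := by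
      calc (n : ℝ) * ((P n) _).toReal
          ≤ (n : ℝ) * (((N n).choose mn : ℝ) * (μ (Set.Ici t)).toReal ^ mn) := by
            exact mul_le_mul_of_nonneg_left hPreal (le_of_lt hnpos)
        _ ≤ Real.exp L * (Real.exp ((3 * K * L + 1) * Real.log 2) *
              Real.exp (-(c / 2) * (t - 1) * (K * L / 2))) := by
            rw [← hnL, ← hexp1, ← hexp2]
            refine mul_le_mul_of_nonneg_left ?_ (le_of_lt hnpos)
            refine mul_le_mul hchoose hpm (by positivity) (by positivity)
        _ = Real.exp (L + (3 * K * L + 1) * Real.log 2 + -(c / 2) * (t - 1) * (K * L / 2)) := by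
            rw [← Real.exp_add, ← Real.exp_add, add_assoc]
    refine hkey.trans ?_
    -- exponent bound: ≤ log 2 - L
    have hexps : L + (3 * K * L + 1) * Real.log 2 + -(c / 2) * (t - 1) * (K * L / 2) ≤
        Real.log 2 - L := by
      have hM : 2 + 3 * K * Real.log 2 ≤ K * c / 4 * (t - 1) := by
        have h1 : K * c / 4 * (M₂ - 1) = 2 + 3 * K * Real.log 2 := by
          rw [hM₂]
          field_simp
          ring
        have h2 : K * c / 4 * (M₂ - 1) ≤ K * c / 4 * (t - 1) :=
          mul_le_mul_of_nonneg_left (by linarith) (by linarith)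
        linarith
      nlinarith [mul_le_mul_of_nonneg_left hM hL0]
    calc Real.exp (L + (3 * K * L + 1) * Real.log 2 + -(c / 2) * (t - 1) * (K * L / 2))
        ≤ Real.exp (Real.log 2 - L) := Real.exp_le_exp.mpr hexps
      _ = 2 / (n : ℝ) := by
          rw [Real.exp_sub, Real.exp_log (by norm_num : (0:ℝ) < 2), hnL]
  -- squeeze
  refine squeeze_zero' ?_ hmain (tendsto_const_div_atTop_nhds_zero_nat 2)
  filter_upwards with n
  positivity
end

section
/- Let (Ω, P) be a probability space, V a finite set, (A_v)_{v∈V} a family of events, and suppose there is a map N assigning to each v ∈ V a finite set N(v) ⊆ V with cardinality at most d, such that for all u, v ∈ V with v ≠ u and v ∉ N(u), the events A_u and A_v are independent. Let Y = ∑_{v∈V} 1_{A_v}. Then Var(Y) ≤ (d+1)·∑_{v∈V} P(A_v) = (d+1)·E[Y]. -/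
open MeasureTheory ProbabilityTheory

/-- If `(A_v)_{v ∈ V}` is a finite family of events such that `A_u` and `A_v` are
independent whenever `v ≠ u` and `v ∉ N(u)`, where each `N(u)` has at most `d` elements,
then `Y = ∑_v 1_{A_v}` satisfies `Var(Y) ≤ (d+1) ∑_v P(A_v) = (d+1) E[Y]`. -/
theorem variance_sum_indicators_local_dependence
    {Ω : Type*} [MeasurableSpace Ω] (P : Measure Ω) [IsProbabilityMeasure P]
    {V : Type*} [Fintype V] [DecidableEq V]
    (A : V → Set Ω) (hA : ∀ v, MeasurableSet (A v))
    (d : ℕ) (N : V → Finset V) (hNd : ∀ v, (N v).card ≤ d)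
    (hindep : ∀ u v, v ≠ u → v ∉ N u → P (A u ∩ A v) = P (A u) * P (A v))
    (Y : Ω → ℝ) (hY : ∀ ω, Y ω = ∑ v, (A v).indicator (fun _ => (1 : ℝ)) ω) :
    variance Y P ≤ ((d : ℝ) + 1) * ∑ v, (P (A v)).toReal ∧
      ∑ v, (P (A v)).toReal = ∫ ω, Y ω ∂P := by
  have hYfun : Y = fun ω => ∑ v, (A v).indicator (fun _ => (1 : ℝ)) ω := funext hY
  set p : V → ℝ := fun v => (P (A v)).toReal with hp
  -- integrability
  have hmem : MemLp Y 2 P := by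
    rw [hYfun]
    exact memLp_finset_sum _ fun v _ =>
      memLp_indicator_const 2 (hA v) (1 : ℝ) (Or.inr (measure_ne_top P _))
  have hint : ∀ v, Integrable ((A v).indicator (fun _ => (1 : ℝ))) P := fun v =>
    memLp_one_iff_integrable.mp
      (memLp_indicator_const 1 (hA v) (1 : ℝ) (Or.inr (measure_ne_top P _)))
  -- expectation
  have hEY : ∫ ω, Y ω ∂P = ∑ v, p v := by
    rw [hYfun, integral_finset_sum _ fun v _ => hint v]
    refine Finset.sum_congr rfl fun v _ => ?_
    rw [integral_indicator_const (1 : ℝ) (hA v), smul_eq_mul, mul_one]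
    rfl
  -- second moment
  have hE2 : ∫ ω, (Y ^ 2) ω ∂P = ∑ u, ∑ v, (P (A u ∩ A v)).toReal := by
    have hpt : (Y ^ 2) = fun ω => ∑ u, ∑ v,
        (A u ∩ A v).indicator (fun _ => (1 : ℝ)) ω := by
      funext ω
      simp only [Pi.pow_apply, hY ω, sq, Finset.sum_mul_sum]
      refine Finset.sum_congr rfl fun u _ => Finset.sum_congr rfl fun v _ => ?_
      rw [← Set.inter_indicator_mul]
      simp
    rw [hpt, integral_finset_sum _ fun u _ => integrable_finset_sum _ fun v _ =>
      memLp_one_iff_integrable.mp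
        (memLp_indicator_const 1 ((hA u).inter (hA v)) (1 : ℝ) (Or.inr (measure_ne_top P _)))]
    refine Finset.sum_congr rfl fun u _ => ?_
    rw [integral_finset_sum _ fun v _ =>
      memLp_one_iff_integrable.mp
        (memLp_indicator_const 1 ((hA u).inter (hA v)) (1 : ℝ) (Or.inr (measure_ne_top P _)))]
    refine Finset.sum_congr rfl fun v _ => ?_
    rw [integral_indicator_const (1 : ℝ) ((hA u).inter (hA v)), smul_eq_mul, mul_one]
    rfl
  have hvar : variance Y P = ∑ u, ∑ v, ((P (A u ∩ A v)).toReal - p u * p v) := by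
    rw [variance_eq_sub hmem, hE2, hEY, sq, Finset.sum_mul_sum, ← Finset.sum_sub_distrib]
    refine Finset.sum_congr rfl fun u _ => ?_
    rw [← Finset.sum_sub_distrib]
  have hbound : ∀ u, ∑ v, ((P (A u ∩ A v)).toReal - p u * p v) ≤ ((d : ℝ) + 1) * p u := by
    intro u
    set S : Finset V := insert u (N u) with hS
    have hzero : ∀ v ∈ Finset.univ, v ∉ S → ((P (A u ∩ A v)).toReal - p u * p v) = 0 := by
      intro v _ hv
      simp only [hS, Finset.mem_insert, not_or] at hv
      rw [hindep u v hv.1 hv.2, ENNReal.toReal_mul]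
      ring
    rw [← Finset.sum_subset (Finset.subset_univ S) hzero]
    have hle : ∀ v ∈ S, ((P (A u ∩ A v)).toReal - p u * p v) ≤ p u := by
      intro v _
      have h1 : (P (A u ∩ A v)).toReal ≤ p u :=
        ENNReal.toReal_mono (measure_ne_top P _) (measure_mono Set.inter_subset_left)
      have h2 : 0 ≤ p u * p v :=
        mul_nonneg ENNReal.toReal_nonneg ENNReal.toReal_nonneg
      linarith
    calc ∑ v ∈ S, ((P (A u ∩ A v)).toReal - p u * p v)
        ≤ ∑ _v ∈ S, p u := Finset.sum_le_sum hle
      _ = (S.card : ℝ) * p u := by rw [Finset.sum_const, nsmul_eq_mul]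
      _ ≤ ((d : ℝ) + 1) * p u := by
          refine mul_le_mul_of_nonneg_right ?_ ENNReal.toReal_nonneg
          have : S.card ≤ d + 1 := le_trans (Finset.card_insert_le _ _)
            (Nat.succ_le_succ (hNd u))
          exact_mod_cast le_trans (Nat.cast_le.mpr this) (by push_cast; linarith)
  constructor
  · calc variance Y P = ∑ u, ∑ v, ((P (A u ∩ A v)).toReal - p u * p v) := hvar
      _ ≤ ∑ u, ((d : ℝ) + 1) * p u := Finset.sum_le_sum fun u _ => hbound u
      _ = ((d : ℝ) + 1) * ∑ v, p v := by rw [← Finset.mul_sum]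
  · exact hEY.symm
end
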